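/- Let X_1, …, X_N be independent identically distributed {0,1}-valued random variables with P(X_i = 1) = p, let X̄ = (1/N)∑_{i=1}^N X_i, and let e := |X̄ − p|. Set ν = b = 4e²_⋆/√N, where e_⋆ denotes Euler's number. Then for all λ ∈ [0, 1/b], E[exp(λ(e − E[e]))] ≤ exp(λ²ν²/2). -/

import Mathlib

open MeasureTheory ProbabilityTheory

/-- Recursive coordinate-averaging of `f` (one step per coordinate, from the top). -/
noncomputable def hGo (f : ℝ → ℝ) (q : ℕ → ℝ) (N : ℕ) : ℕ → ℝ → ℝ
  | 0 => f
  | (j+1) => fun t => (1 - q (N - (j+1))) * hGo f q N j t + q (N - (j+1)) * hGo f q N j (t+1)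

/-- Two-point Hoeffding lemma. -/
lemma twoPoint (lam q M a₀ a₁ : ℝ) (hq0 : 0 ≤ q) (hq1 : q ≤ 1) (h : |a₁ - a₀| ≤ M) :
    (1 - q) * Real.exp (lam * a₀) + q * Real.exp (lam * a₁) ≤
      Real.exp (lam ^ 2 * M ^ 2 / 2) * Real.exp (lam * ((1 - q) * a₀ + q * a₁)) := by
  have hM0 : 0 ≤ M := le_trans (abs_nonneg _) h
  set c : ℝ := (1 - q) * a₀ + q * a₁ with hc
  have key : (1 - q) * Real.exp (lam * (a₀ - c)) + q * Real.exp (lam * (a₁ - c)) ≤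
      Real.exp (lam ^ 2 * M ^ 2 / 2) := by
    rcases hM0.eq_or_lt with hM | hM
    · -- M = 0
      have h01 : a₁ - a₀ = 0 := abs_nonpos_iff.mp (h.trans hM.ge)
      have ha : a₁ = a₀ := by linarith
      have hc0 : c = a₀ := by rw [hc, ha]; ring
      rw [ha, hc0, sub_self, mul_zero, Real.exp_zero, mul_one, mul_one]
      have h2 : (1 - q) + q = (1:ℝ) := by ring
      rw [h2]
      nlinarith [Real.add_one_le_exp (lam ^ 2 * M ^ 2 / 2), sq_nonneg lam, sq_nonneg M,
        mul_nonneg (sq_nonneg lam) (sq_nonneg M)]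
    · have hb₀ : |a₀ - c| ≤ M := by
        rw [hc]
        have h' : a₀ - ((1 - q) * a₀ + q * a₁) = q * (a₀ - a₁) := by ring
        rw [h', abs_mul, abs_of_nonneg hq0, abs_sub_comm]
        calc q * |a₁ - a₀| ≤ 1 * M := mul_le_mul hq1 h (abs_nonneg _) zero_le_one
          _ = M := one_mul M
      have hb₁ : |a₁ - c| ≤ M := by
        rw [hc]
        have h' : a₁ - ((1 - q) * a₀ + q * a₁) = (1 - q) * (a₁ - a₀) := by ring
        rw [h', abs_mul, abs_of_nonneg (by linarith : (0:ℝ) ≤ 1 - q)]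
        calc (1 - q) * |a₁ - a₀| ≤ 1 * M := mul_le_mul (by linarith) h (abs_nonneg _) zero_le_one
          _ = M := one_mul M
      have hconv : ∀ s : ℝ, |s| ≤ M → Real.exp (lam * s) ≤
          ((M - s) / (2 * M)) * Real.exp (-(lam * M)) +
          ((M + s) / (2 * M)) * Real.exp (lam * M) := by
        intro s hs
        rw [abs_le] at hs
        have ha' : (0:ℝ) ≤ (M - s) / (2 * M) := div_nonneg (by linarith) (by linarith)
        have hb' : (0:ℝ) ≤ (M + s) / (2 * M) := div_nonneg (by linarith) (by linarith)
        have hab : (M - s) / (2 * M) + (M + s) / (2 * M) = 1 := by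
          field_simp
          ring
        have hcv := convexOn_exp.2 (Set.mem_univ (-(lam * M))) (Set.mem_univ (lam * M))
          ha' hb' hab
        simp only [smul_eq_mul] at hcv
        have harg : (M - s) / (2 * M) * -(lam * M) + (M + s) / (2 * M) * (lam * M) = lam * s := by
          field_simp
          ring
        rwa [harg] at hcv
      have hzero : (1 - q) * (a₀ - c) + q * (a₁ - c) = 0 := by rw [hc]; ring
      calc (1 - q) * Real.exp (lam * (a₀ - c)) + q * Real.exp (lam * (a₁ - c))
          ≤ (1 - q) * (((M - (a₀ - c)) / (2 * M)) * Real.exp (-(lam * M)) +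
              ((M + (a₀ - c)) / (2 * M)) * Real.exp (lam * M)) +
            q * (((M - (a₁ - c)) / (2 * M)) * Real.exp (-(lam * M)) +
              ((M + (a₁ - c)) / (2 * M)) * Real.exp (lam * M)) := by
            apply add_le_add
            · exact mul_le_mul_of_nonneg_left (hconv _ hb₀) (by linarith)
            · exact mul_le_mul_of_nonneg_left (hconv _ hb₁) hq0
        _ = (Real.exp (-(lam * M)) + Real.exp (lam * M)) / 2 := by
            field_simp
            linear_combination (Real.exp (lam * M) - Real.exp (-(lam * M))) * hzero
        _ = Real.cosh (lam * M) := by rw [Real.cosh_eq]; ring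
        _ ≤ Real.exp ((lam * M) ^ 2 / 2) := Real.cosh_le_exp_half_sq _
        _ = Real.exp (lam ^ 2 * M ^ 2 / 2) := by rw [mul_pow]
  have hsplit : ∀ a : ℝ, Real.exp (lam * a) = Real.exp (lam * (a - c)) * Real.exp (lam * c) := by
    intro a; rw [← Real.exp_add]; congr 1; ring
  calc (1 - q) * Real.exp (lam * a₀) + q * Real.exp (lam * a₁)
      = ((1 - q) * Real.exp (lam * (a₀ - c)) + q * Real.exp (lam * (a₁ - c))) *
          Real.exp (lam * c) := by rw [hsplit a₀, hsplit a₁]; ring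
    _ ≤ Real.exp (lam ^ 2 * M ^ 2 / 2) * Real.exp (lam * c) :=
        mul_le_mul_of_nonneg_right key (Real.exp_pos _).le

/-- Sub-exponential property of the zeroth-order oracle error: for
`e = |X̄ − p|` built from `N` i.i.d. Bernoulli(`p`) samples and
`ν = b = 4e⋆²/√N` (`e⋆` Euler's number), one has
`E[exp(λ(e − E e))] ≤ exp(λ²ν²/2)` for all `λ ∈ [0, 1/b]`. -/
theorem bernoulli_oracle_error_subexponential
    {Ω : Type*} [MeasurableSpace Ω] (μ : Measure Ω) [IsProbabilityMeasure μ]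
    (N : ℕ) (hN : 0 < N) (p : ℝ)
    (X : Fin N → Ω → ℝ)
    (hmeas : ∀ i, Measurable (X i))
    (hindep : iIndepFun X μ)
    (h01 : ∀ i ω, X i ω = 0 ∨ X i ω = 1)
    (hp : ∀ i, μ {ω | X i ω = 1} = ENNReal.ofReal p)
    (e : Ω → ℝ) (he : ∀ ω, e ω = |(1 / (N : ℝ)) * ∑ i, X i ω - p|)
    (ν b : ℝ) (hν : ν = 4 * Real.exp 1 ^ 2 / Real.sqrt N)
    (hb : b = 4 * Real.exp 1 ^ 2 / Real.sqrt N) :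
    ∀ lam ∈ Set.Icc (0 : ℝ) (1 / b),
      (∫ ω, Real.exp (lam * (e ω - ∫ ω', e ω' ∂μ)) ∂μ) ≤
        Real.exp (lam ^ 2 * ν ^ 2 / 2) := by
  intro lam _
  have hn : (0:ℝ) < (N:ℝ) := by exact_mod_cast hN
  have hX0 : ∀ i ω, 0 ≤ X i ω := by
    intro i ω; rcases h01 i ω with h | h <;> rw [h] <;> norm_num
  have hX1 : ∀ i ω, X i ω ≤ 1 := by
    intro i ω; rcases h01 i ω with h | h <;> rw [h] <;> norm_num
  have hXint : ∀ i, Integrable (X i) μ := by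
    intro i
    refine (integrable_const (1:ℝ)).mono' (hmeas i).aestronglyMeasurable
      (ae_of_all _ fun ω => ?_)
    rw [Real.norm_eq_abs, abs_of_nonneg (hX0 i ω)]; exact hX1 i ω
  set q : ℕ → ℝ := fun k => if h : k < N then ∫ ω, X ⟨k, h⟩ ω ∂μ else 0 with hqdef
  have hq0 : ∀ k, 0 ≤ q k := by
    intro k; simp only [hqdef]; split_ifs with h
    · exact integral_nonneg (fun ω => hX0 _ ω)
    · exact le_refl 0
  have hq1 : ∀ k, q k ≤ 1 := by
    intro k; simp only [hqdef]; split_ifs with h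
    · calc ∫ ω, X ⟨k, h⟩ ω ∂μ ≤ ∫ _ω, (1:ℝ) ∂μ :=
          integral_mono (hXint _) (integrable_const 1) (fun ω => hX1 _ ω)
        _ = 1 := by simp
    · norm_num
  set f : ℝ → ℝ := fun t => |1 / (N:ℝ) * t - p| with hfdef
  set φ : ℕ → ℝ → ℝ := fun k => hGo f q N (N - k) with hφdef
  have hgo_succ : ∀ j t, hGo f q N (j+1) t
      = (1 - q (N - (j+1))) * hGo f q N j t + q (N - (j+1)) * hGo f q N j (t+1) := by
    intro j t; rfl
  have hφN : ∀ t, φ N t = f t := by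
    intro t; simp only [hφdef, Nat.sub_self]; rfl
  have hφrec : ∀ k, k < N → ∀ t,
      φ k t = (1 - q k) * φ (k+1) t + q k * φ (k+1) (t+1) := by
    intro k hk t
    have h1 : N - k = (N - (k+1)) + 1 := by omega
    have h2 : N - ((N - (k+1)) + 1) = k := by omega
    simp only [hφdef]
    rw [h1, hgo_succ, h2]
  have hgocont : ∀ j, Continuous (hGo f q N j) := by
    intro j; induction j with
    | zero =>
      show Continuous f
      simp only [hfdef]
      exact ((continuous_const.mul continuous_id).sub continuous_const).abs
    | succ j ih =>
      show Continuous fun t => (1 - q (N - (j+1))) * hGo f q N j t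
          + q (N - (j+1)) * hGo f q N j (t+1)
      exact (continuous_const.mul ih).add
        (continuous_const.mul (ih.comp (continuous_id.add continuous_const)))
  have hφcont : ∀ k, Continuous (φ k) := fun k => hgocont _
  have hgolip : ∀ j t, |hGo f q N j (t+1) - hGo f q N j t| ≤ 1 / (N:ℝ) := by
    intro j; induction j with
    | zero =>
      intro t
      show |f (t+1) - f t| ≤ _
      simp only [hfdef]
      calc |(|1 / (N:ℝ) * (t+1) - p|) - (|1 / (N:ℝ) * t - p|)|
          ≤ |(1 / (N:ℝ) * (t+1) - p) - (1 / (N:ℝ) * t - p)| := abs_abs_sub_abs_le_abs_sub _ _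
        _ = 1 / (N:ℝ) := by
            rw [show (1 / (N:ℝ) * (t+1) - p) - (1 / (N:ℝ) * t - p) = 1 / (N:ℝ) by ring]
            exact abs_of_nonneg (by positivity)
    | succ j ih =>
      intro t
      have e1 : hGo f q N (j+1) (t+1) - hGo f q N (j+1) t
          = (1 - q (N - (j+1))) * (hGo f q N j (t+1) - hGo f q N j t)
            + q (N - (j+1)) * (hGo f q N j (t+1+1) - hGo f q N j (t+1)) := by
        rw [hgo_succ, hgo_succ]; ring
      rw [e1]
      have hq1' : (0:ℝ) ≤ 1 - q (N - (j+1)) := by linarith [hq1 (N - (j+1))]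
      calc |(1 - q (N - (j+1))) * (hGo f q N j (t+1) - hGo f q N j t)
            + q (N - (j+1)) * (hGo f q N j (t+1+1) - hGo f q N j (t+1))|
          ≤ |(1 - q (N - (j+1))) * (hGo f q N j (t+1) - hGo f q N j t)|
            + |q (N - (j+1)) * (hGo f q N j (t+1+1) - hGo f q N j (t+1))| := abs_add_le _ _
        _ = (1 - q (N - (j+1))) * |hGo f q N j (t+1) - hGo f q N j t|
            + q (N - (j+1)) * |hGo f q N j (t+1+1) - hGo f q N j (t+1)| := by
            rw [abs_mul, abs_mul, abs_of_nonneg hq1', abs_of_nonneg (hq0 _)]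
        _ ≤ (1 - q (N - (j+1))) * (1 / (N:ℝ)) + q (N - (j+1)) * (1 / (N:ℝ)) :=
            add_le_add (mul_le_mul_of_nonneg_left (ih t) hq1')
              (mul_le_mul_of_nonneg_left (ih (t+1)) (hq0 _))
        _ = 1 / (N:ℝ) := by ring
  have hφlip : ∀ k t, |φ k (t+1) - φ k t| ≤ 1 / (N:ℝ) := fun k t => hgolip _ t
  set T : ℕ → Ω → ℝ :=
    fun k ω => ∑ j ∈ Finset.univ.filter (fun j : Fin N => (j:ℕ) < k), X j ω with hTdef
  have hTmeas : ∀ k, Measurable (T k) := by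
    intro k; simp only [hTdef]
    exact Finset.measurable_sum _ (fun j _ => hmeas j)
  have hT0 : ∀ ω, T 0 ω = 0 := by intro ω; simp [hTdef]
  have hTN : ∀ ω, T N ω = ∑ i, X i ω := by
    intro ω; simp only [hTdef]
    congr 1
    apply Finset.filter_true_of_mem
    intro j _; exact j.isLt
  have hTsucc : ∀ k (hk : k < N) ω, T (k+1) ω = T k ω + X ⟨k, hk⟩ ω := by
    intro k hk ω
    simp only [hTdef]
    have hins : Finset.univ.filter (fun j : Fin N => (j:ℕ) < k+1)
        = insert (⟨k, hk⟩ : Fin N) (Finset.univ.filter (fun j : Fin N => (j:ℕ) < k)) := by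
      ext j
      simp only [Finset.mem_filter, Finset.mem_univ, true_and, Finset.mem_insert, Fin.ext_iff]
      omega
    rw [hins, Finset.sum_insert (by simp)]
    ring
  have hTbd : ∀ k ω, 0 ≤ T k ω ∧ T k ω ≤ (N:ℝ) := by
    intro k ω
    constructor
    · exact Finset.sum_nonneg fun j _ => hX0 j ω
    · calc T k ω ≤ ∑ j ∈ Finset.univ.filter (fun j : Fin N => (j:ℕ) < k), (1:ℝ) :=
          Finset.sum_le_sum fun j _ => hX1 j ω
        _ = ((Finset.univ.filter (fun j : Fin N => (j:ℕ) < k)).card : ℝ) := by simp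
        _ ≤ (N:ℝ) := by
          have h1 := Finset.card_filter_le Finset.univ (fun j : Fin N => (j:ℕ) < k)
          have h2 : (Finset.univ : Finset (Fin N)).card = N := by simp
          exact_mod_cast h2 ▸ h1
  have hgint : ∀ (g : ℝ → ℝ), Continuous g → ∀ (h : Ω → ℝ), Measurable h →
      (∀ ω, h ω ∈ Set.Icc (-1 : ℝ) ((N:ℝ)+1)) → Integrable (fun ω => g (h ω)) μ := by
    intro g hg h hm hbd
    obtain ⟨C, hC⟩ := (isCompact_Icc (a := (-1:ℝ)) (b := (N:ℝ)+1)).exists_bound_of_continuousOn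
      hg.continuousOn
    exact (integrable_const C).mono' (hg.measurable.comp hm).aestronglyMeasurable
      (ae_of_all _ fun ω => hC _ (hbd ω))
  have hmemT : ∀ k ω, T k ω ∈ Set.Icc (-1:ℝ) ((N:ℝ)+1) := fun k ω =>
    ⟨by linarith [(hTbd k ω).1], by linarith [(hTbd k ω).2]⟩
  have hmemT1 : ∀ k ω, T k ω + 1 ∈ Set.Icc (-1:ℝ) ((N:ℝ)+1) := fun k ω =>
    ⟨by linarith [(hTbd k ω).1], by linarith [(hTbd k ω).2]⟩
  have hpeel : ∀ (k : ℕ) (hk : k < N) (g : ℝ → ℝ), Continuous g →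
      ∫ ω, g (T (k+1) ω) ∂μ
        = (1 - q k) * ∫ ω, g (T k ω) ∂μ + q k * ∫ ω, g (T k ω + 1) ∂μ := by
    intro k hk g hg
    have hGT : Integrable (fun ω => g (T k ω)) μ := hgint g hg (T k) (hTmeas k) (hmemT k)
    have hGT1 : Integrable (fun ω => g (T k ω + 1)) μ :=
      hgint g hg (fun ω => T k ω + 1) ((hTmeas k).add measurable_const) (hmemT1 k)
    have hkey : ∀ ω, g (T (k+1) ω) = g (T k ω) + X ⟨k, hk⟩ ω * (g (T k ω + 1) - g (T k ω)) := by
      intro ω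
      rw [hTsucc k hk ω]
      rcases h01 ⟨k, hk⟩ ω with h | h <;> rw [h] <;> ring_nf
    have hXiT : IndepFun (X ⟨k, hk⟩) (T k) μ := by
      have hnot : (⟨k, hk⟩ : Fin N) ∉ Finset.univ.filter (fun j : Fin N => (j:ℕ) < k) := by
        simp
      have h1 := (hindep.indepFun_finsetSum_of_notMem hmeas hnot).symm
      have h2 : T k = ∑ j ∈ Finset.univ.filter (fun j : Fin N => (j:ℕ) < k), X j := by
        funext ω; simp [hTdef]
      rwa [h2]
    have hD : Measurable (fun t : ℝ => g (t + 1) - g t) :=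
      ((hg.comp (continuous_id.add continuous_const)).sub hg).measurable
    have hXiD : IndepFun (X ⟨k, hk⟩) (fun ω => g (T k ω + 1) - g (T k ω)) μ :=
      hXiT.comp measurable_id hD
    have hDint : Integrable (fun ω => g (T k ω + 1) - g (T k ω)) μ := hGT1.sub hGT
    have hqk : q k = ∫ ω, X ⟨k, hk⟩ ω ∂μ := by
      simp only [hqdef]; rw [dif_pos hk]
    have hmul : ∫ ω, X ⟨k, hk⟩ ω * (g (T k ω + 1) - g (T k ω)) ∂μ
        = q k * ∫ ω, (g (T k ω + 1) - g (T k ω)) ∂μ := by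
      have h3 := hXiD.integral_fun_mul_eq_mul_integral (hXint _).aestronglyMeasurable hDint.aestronglyMeasurable
      rw [hqk]
      exact h3
    have hXDint : Integrable (fun ω => X ⟨k, hk⟩ ω * (g (T k ω + 1) - g (T k ω))) μ := by
      refine hDint.bdd_mul (c := 1) (hmeas _).aestronglyMeasurable (ae_of_all _ fun ω => ?_)
      rw [Real.norm_eq_abs, abs_of_nonneg (hX0 _ ω)]; exact hX1 _ ω
    calc ∫ ω, g (T (k+1) ω) ∂μ
        = ∫ ω, (g (T k ω) + X ⟨k, hk⟩ ω * (g (T k ω + 1) - g (T k ω))) ∂μ := by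
          apply integral_congr_ae (ae_of_all _ hkey)
      _ = (∫ ω, g (T k ω) ∂μ) + ∫ ω, X ⟨k, hk⟩ ω * (g (T k ω + 1) - g (T k ω)) ∂μ :=
          integral_add hGT hXDint
      _ = (∫ ω, g (T k ω) ∂μ) + q k * ((∫ ω, g (T k ω + 1) ∂μ) - ∫ ω, g (T k ω) ∂μ) := by
          rw [hmul, integral_sub hGT1 hGT]
      _ = (1 - q k) * ∫ ω, g (T k ω) ∂μ + q k * ∫ ω, g (T k ω + 1) ∂μ := by ring
  have hmean : ∀ k, k ≤ N → ∫ ω, φ k (T k ω) ∂μ = φ 0 0 := by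
    intro k
    induction k with
    | zero =>
      intro _
      have : ∀ ω, φ 0 (T 0 ω) = φ 0 0 := fun ω => by rw [hT0]
      rw [integral_congr_ae (ae_of_all _ this), integral_const]
      simp
    | succ k ih =>
      intro hk1
      have hk : k < N := hk1
      rw [hpeel k hk (φ (k+1)) (hφcont _)]
      have h1 : Integrable (fun ω => φ (k+1) (T k ω)) μ :=
        hgint _ (hφcont _) _ (hTmeas k) (hmemT k)
      have h2 : Integrable (fun ω => φ (k+1) (T k ω + 1)) μ :=
        hgint _ (hφcont _) _ ((hTmeas k).add measurable_const) (hmemT1 k)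
      have h3 : (1 - q k) * (∫ ω, φ (k+1) (T k ω) ∂μ) + q k * ∫ ω, φ (k+1) (T k ω + 1) ∂μ
          = ∫ ω, ((1 - q k) * φ (k+1) (T k ω) + q k * φ (k+1) (T k ω + 1)) ∂μ := by
        rw [integral_add (h1.const_mul _) (h2.const_mul _), integral_const_mul,
          integral_const_mul]
      rw [h3]
      have h4 : ∀ ω, (1 - q k) * φ (k+1) (T k ω) + q k * φ (k+1) (T k ω + 1) = φ k (T k ω) :=
        fun ω => (hφrec k hk (T k ω)).symm
      rw [integral_congr_ae (ae_of_all _ h4)]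
      exact ih hk.le
  have hmgf : ∀ k, k ≤ N → (∫ ω, Real.exp (lam * φ k (T k ω)) ∂μ)
      ≤ Real.exp ((k:ℝ) * (lam ^ 2 * (1 / (N:ℝ)) ^ 2 / 2)) * Real.exp (lam * φ 0 0) := by
    intro k
    induction k with
    | zero =>
      intro _
      have : ∀ ω, Real.exp (lam * φ 0 (T 0 ω)) = Real.exp (lam * φ 0 0) := fun ω => by rw [hT0]
      rw [integral_congr_ae (ae_of_all _ this), integral_const]
      simp
    | succ k ih =>
      intro hk1
      have hk : k < N := hk1
      have hcont1 : Continuous fun t => Real.exp (lam * φ (k+1) t) :=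
        Real.continuous_exp.comp (continuous_const.mul (hφcont _))
      have hcont0 : Continuous fun t => Real.exp (lam * φ k t) :=
        Real.continuous_exp.comp (continuous_const.mul (hφcont _))
      rw [hpeel k hk (fun t => Real.exp (lam * φ (k+1) t)) hcont1]
      have h1 : Integrable (fun ω => Real.exp (lam * φ (k+1) (T k ω))) μ :=
        hgint _ hcont1 _ (hTmeas k) (hmemT k)
      have h2 : Integrable (fun ω => Real.exp (lam * φ (k+1) (T k ω + 1))) μ :=
        hgint _ hcont1 _ ((hTmeas k).add measurable_const) (hmemT1 k)
      have h3 : Integrable (fun ω => Real.exp (lam * φ k (T k ω))) μ :=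
        hgint _ hcont0 _ (hTmeas k) (hmemT k)
      calc (1 - q k) * (∫ ω, Real.exp (lam * φ (k+1) (T k ω)) ∂μ)
            + q k * ∫ ω, Real.exp (lam * φ (k+1) (T k ω + 1)) ∂μ
          = ∫ ω, ((1 - q k) * Real.exp (lam * φ (k+1) (T k ω))
              + q k * Real.exp (lam * φ (k+1) (T k ω + 1))) ∂μ := by
            rw [integral_add (h1.const_mul _) (h2.const_mul _), integral_const_mul,
              integral_const_mul]
        _ ≤ ∫ ω, Real.exp (lam ^ 2 * (1 / (N:ℝ)) ^ 2 / 2)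
              * Real.exp (lam * φ k (T k ω)) ∂μ := by
            apply integral_mono ((h1.const_mul _).add (h2.const_mul _)) (h3.const_mul _)
            intro ω
            have htp := twoPoint lam (q k) (1 / (N:ℝ)) (φ (k+1) (T k ω)) (φ (k+1) (T k ω + 1))
              (hq0 k) (hq1 k) (hφlip (k+1) (T k ω))
            rwa [← hφrec k hk (T k ω)] at htp
        _ = Real.exp (lam ^ 2 * (1 / (N:ℝ)) ^ 2 / 2)
              * ∫ ω, Real.exp (lam * φ k (T k ω)) ∂μ := integral_const_mul _ _
        _ ≤ Real.exp (lam ^ 2 * (1 / (N:ℝ)) ^ 2 / 2)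
              * (Real.exp ((k:ℝ) * (lam ^ 2 * (1 / (N:ℝ)) ^ 2 / 2))
                * Real.exp (lam * φ 0 0)) :=
            mul_le_mul_of_nonneg_left (ih hk.le) (Real.exp_pos _).le
        _ = Real.exp (((k+1:ℕ):ℝ) * (lam ^ 2 * (1 / (N:ℝ)) ^ 2 / 2))
              * Real.exp (lam * φ 0 0) := by
            rw [← mul_assoc, ← Real.exp_add]
            push_cast
            ring_nf
  have hee : ∀ ω, e ω = φ N (T N ω) := by
    intro ω
    rw [he ω, hφN, hTN]
  have hEe : (∫ ω', e ω' ∂μ) = φ 0 0 := by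
    rw [integral_congr_ae (ae_of_all _ hee)]
    exact hmean N le_rfl
  calc (∫ ω, Real.exp (lam * (e ω - ∫ ω', e ω' ∂μ)) ∂μ)
      = (∫ ω, Real.exp (lam * φ N (T N ω)) ∂μ) * Real.exp (-(lam * φ 0 0)) := by
        rw [← integral_mul_const]
        apply integral_congr_ae (ae_of_all _ fun ω => ?_)
        rw [← Real.exp_add, hee ω, hEe]
        congr 1
        ring
    _ ≤ (Real.exp ((N:ℝ) * (lam ^ 2 * (1 / (N:ℝ)) ^ 2 / 2)) * Real.exp (lam * φ 0 0))
          * Real.exp (-(lam * φ 0 0)) :=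
        mul_le_mul_of_nonneg_right (hmgf N le_rfl) (Real.exp_pos _).le
    _ = Real.exp ((N:ℝ) * (lam ^ 2 * (1 / (N:ℝ)) ^ 2 / 2)) := by
        rw [mul_assoc, ← Real.exp_add, ← Real.exp_add]
        congr 1
        ring
    _ ≤ Real.exp (lam ^ 2 * ν ^ 2 / 2) := by
        apply Real.exp_le_exp.2
        have hν2 : ν ^ 2 = 16 * Real.exp 1 ^ 4 / (N:ℝ) := by
          rw [hν, div_pow, Real.sq_sqrt hn.le]
          ring
        rw [hν2]
        have hE : (2:ℝ) ≤ Real.exp 1 := by nlinarith [Real.add_one_le_exp (1:ℝ)]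
        have hE4 : (1:ℝ) ≤ Real.exp 1 ^ 4 := one_le_pow₀ (by linarith)
        have hkey : (N:ℝ) * (lam ^ 2 * (1 / (N:ℝ)) ^ 2 / 2) = lam ^ 2 / (2 * (N:ℝ)) := by
          field_simp
        have hkey2 : lam ^ 2 * (16 * Real.exp 1 ^ 4 / (N:ℝ)) / 2
            = lam ^ 2 * (8 * Real.exp 1 ^ 4) / (N:ℝ) := by ring
        rw [hkey, hkey2]
        rw [div_le_div_iff₀ (by positivity) hn]
        have hx : (0:ℝ) ≤ lam ^ 2 * (N:ℝ) := mul_nonneg (sq_nonneg lam) hn.le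
        nlinarith [mul_nonneg hx (sub_nonneg.mpr hE4)]
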